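/- Let (G,F) be a temporal cost graph with lifetime bound T, let v_s be a vertex, let c : V → {0,1,…,k} be a colouring with c⁻¹(0) = {v_s}, and let c₀ = 0, c₁, …, c_k be an ordering of the colours (where c₁,…,c_k is a permutation of {1,…,k}). For 0 ≤ i ≤ k let V_i = c⁻¹(c_i). For a set I of colours and vertices u,v and times t₁ < t₂, let F̂_I(u,v,t₁,t₂) be the minimum cost of a valid walk on (G,F) from u to v whose first departure time is exactly t₁, whose last arrival time is exactly t₂, and in which every visited vertex other than possibly v has colour in I (∞ if no such walk exists). For v ∈ V_i and t ∈ {1,…,T}, let F*_π(v,t) be the minimum cost of a valid walk on (G,F) from v_s to v with all arrival times at most t such that only the colours c₀,c₁,…,c_i appear among its visited vertices, the first appearances of these colours along the walk occur in the order c₀,c₁,…,c_i, and v is the first visited vertex of colour c_i (∞ if no such walk exists); and let F*_π(v_s,t) = 0 for all t. Then for every 1 ≤ i ≤ k, every v ∈ V_i and every t ∈ {1,…,T}: F*_π(v,t) = min { F*_π(v',t₁) + F̂_{{c₀,…,c_{i-1}}}(v',v,t₁,t₂) : v' ∈ V_{i-1} and 1 ≤ t₁ < t₂ ≤ t }. 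-/

import Mathlib

/-- The source vertex of a quadruple `(u, v, t₁, t₂)`. -/
def qsrc {V : Type*} (q : V × V × ℕ × ℕ) : V := q.1

/-- The destination vertex of a quadruple `(u, v, t₁, t₂)`. -/
def qdst {V : Type*} (q : V × V × ℕ × ℕ) : V := q.2.1

/-- The departure time of a quadruple `(u, v, t₁, t₂)`. -/
def qdep {V : Type*} (q : V × V × ℕ × ℕ) : ℕ := q.2.2.1

/-- The arrival time of a quadruple `(u, v, t₁, t₂)`. -/
def qarr {V : Type*} (q : V × V × ℕ × ℕ) : ℕ := q.2.2.2

/-- A valid walk on a temporal cost graph with cost function `F`: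
consecutive quadruples match up, every quadruple has `t < t'` and finite cost,
and arrival times precede subsequent departure times. -/
def IsValidWalk {V : Type*} (F : V → V → ℕ → ℕ → ℕ∞) (W : List (V × V × ℕ × ℕ)) : Prop :=
  (∀ i, ∀ hi : i + 1 < W.length, qdst (W[i]'(Nat.lt_of_succ_lt hi)) = qsrc (W[i + 1]'hi)) ∧
  (∀ q ∈ W, qdep q < qarr q ∧ F (qsrc q) (qdst q) (qdep q) (qarr q) < ⊤) ∧
  (∀ i, ∀ hi : i + 1 < W.length, qarr (W[i]'(Nat.lt_of_succ_lt hi)) ≤ qdep (W[i + 1]'hi))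

/-- The cost of a walk: the sum of the costs of its quadruples. -/
def walkCost {V : Type*} (F : V → V → ℕ → ℕ → ℕ∞) (W : List (V × V × ℕ × ℕ)) : ℕ∞ :=
  (W.map fun q => F (qsrc q) (qdst q) (qdep q) (qarr q)).sum

/-- The list of vertices visited by a walk, namely `u₁, v₁, v₂, …, v_ℓ`. -/
def visited {V : Type*} : List (V × V × ℕ × ℕ) → List V
  | [] => []
  | q :: rest => qsrc q :: (q :: rest).map qdst

/-- The (nonempty) walk `W` is from `s` to `t`. -/
def WalkFrom {V : Type*} (W : List (V × V × ℕ × ℕ)) (s t : V) : Prop :=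
  ∃ q1 ql, W.head? = some q1 ∧ W.getLast? = some ql ∧ qsrc q1 = s ∧ qdst ql = t

/-- `FhatI F c I u v t₁ t₂` is the minimum cost of a valid walk from `u` to `v` whose
first departure time is exactly `t₁`, whose last arrival time is exactly `t₂`, and in
which every visited vertex other than possibly `v` has colour in `I` (`∞` if none). -/
noncomputable def FhatI {V : Type*} (F : V → V → ℕ → ℕ → ℕ∞) (c : V → ℕ) (I : Set ℕ)
    (u v : V) (t₁ t₂ : ℕ) : ℕ∞ :=
  sInf {x : ℕ∞ | ∃ W q1 ql, IsValidWalk F W ∧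
    W.head? = some q1 ∧ W.getLast? = some ql ∧
    qsrc q1 = u ∧ qdst ql = v ∧ qdep q1 = t₁ ∧ qarr ql = t₂ ∧
    (∀ w ∈ visited W, w ≠ v → c w ∈ I) ∧ walkCost F W = x}

open scoped Classical in
/-- `Fstar F c π vs i v t` is the minimum cost of a valid walk from `vs` to `v` with all
arrival times at most `t`, in which only the colours `π 0, …, π i` appear among the
visited vertices, all of them appear, their first appearances occur in the order
`π 0, π 1, …, π i`, and `v` is the first visited vertex of colour `π i`; it is `0` when
`v = vs`. -/
noncomputable def Fstar {V : Type*} (F : V → V → ℕ → ℕ → ℕ∞) (c : V → ℕ) (π : ℕ → ℕ)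
    (vs : V) (i : ℕ) (v : V) (t : ℕ) : ℕ∞ :=
  if v = vs then 0
  else sInf {x : ℕ∞ | ∃ W, IsValidWalk F W ∧ WalkFrom W vs v ∧
    (∀ q ∈ W, qarr q ≤ t) ∧
    (∀ w ∈ visited W, ∃ j ≤ i, c w = π j) ∧
    (∀ j ≤ i, ∃ w ∈ visited W, c w = π j) ∧
    (∀ j j' : ℕ, j < j' → j' ≤ i → ∀ l₁ l₂ : List V, visited W = l₁ ++ l₂ →
      (∃ w ∈ l₁, c w = π j') → ∃ w ∈ l₁, c w = π j) ∧
    (∃ l₁ l₂ : List V, visited W = l₁ ++ v :: l₂ ∧ ∀ w ∈ l₁, c w ≠ π i) ∧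
    walkCost F W = x}


section Infra

variable {V : Type*} {F : V → V → ℕ → ℕ → ℕ∞} {W W1 W2 : List (V × V × ℕ × ℕ)}

lemma visited_eq (h : W ≠ []) : visited W = qsrc (W.head h) :: W.map qdst := by
  cases W with
  | nil => simp at h
  | cons q rest => rfl

lemma visited_length (h : W ≠ []) : (visited W).length = W.length + 1 := by
  rw [visited_eq h]; simp

lemma visited_getElem_succ {j : ℕ} (hj : j < W.length) :
    (visited W)[j+1]'(by rw [visited_length (List.ne_nil_of_length_pos (by omega))]; omega) = qdst (W[j]'hj) := by
  have h : W ≠ [] := by intro h; subst h; simp at hj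
  have := visited_eq h
  rw [List.getElem_of_eq this]
  simp

lemma visited_getElem_zero (h : W ≠ []) :
    (visited W)[0]'(by rw [visited_length h]; omega) = qsrc (W[0]'(List.length_pos_of_ne_nil h)) := by
  rw [List.getElem_of_eq (visited_eq h)]
  simp [List.head_eq_getElem]

lemma mem_visited_iff (h : W ≠ []) {w : V} :
    w ∈ visited W ↔ w = qsrc (W[0]'(List.length_pos_of_ne_nil h)) ∨ ∃ j, ∃ hj : j < W.length, w = qdst (W[j]'hj) := by
  rw [visited_eq h, List.mem_cons, List.head_eq_getElem, List.mem_map]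
  apply or_congr Iff.rfl
  constructor
  · rintro ⟨q, hq, rfl⟩
    obtain ⟨j, hj, rfl⟩ := List.mem_iff_getElem.mp hq
    exact ⟨j, hj, rfl⟩
  · rintro ⟨j, hj, rfl⟩
    exact ⟨W[j], List.getElem_mem hj, rfl⟩

lemma visited_take {s : ℕ} (hs : 1 ≤ s) : visited (W.take s) = (visited W).take (s+1) := by
  cases W with
  | nil => simp [visited]
  | cons q rest =>
    obtain ⟨s', rfl⟩ : ∃ s', s = s' + 1 := ⟨s - 1, by omega⟩
    simp [visited, List.map_take]

lemma visited_drop (hchain : ∀ i, ∀ hi : i + 1 < W.length,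
      qdst (W[i]'(Nat.lt_of_succ_lt hi)) = qsrc (W[i + 1]'hi))
    {r : ℕ} (hr : r < W.length) : visited (W.drop r) = (visited W).drop r := by
  induction r with
  | zero => simp
  | succ r ih =>
    have hr' : r < W.length := by omega
    have hih := ih hr'
    cases hX : W.drop r with
    | nil => exfalso; have := (List.length_drop (i := r) (l := W)); rw [hX] at this; simp at this; omega
    | cons q rest =>
      cases rest with
      | nil =>
        exfalso; have := (List.length_drop (i := r) (l := W)); rw [hX] at this; simp at this; omega
      | cons q2 rest2 =>
        have h0 : W[r]'hr' = q := by
          have h : (W.drop r)[0]'(by rw [hX]; simp) = W[r+0]'(by omega) := List.getElem_drop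
          simp [hX] at h; simpa using h.symm
        have h1 : W[r+1]'hr = q2 := by
          have h : (W.drop r)[1]'(by rw [hX]; simp) = W[r+1]'(by omega) := List.getElem_drop
          simp [hX] at h; simpa using h.symm
        have hq : qdst q = qsrc q2 := by
          have := hchain r hr; rw [h0, h1] at this; exact this
        have hstep : W.drop (r+1) = q2 :: rest2 := by
          have h := congrArg (List.drop 1) hX
          rw [List.drop_drop] at h
          simpa using h
        have hstep2 : (visited W).drop (r+1) = qdst q :: List.map qdst (q2 :: rest2) := by
          have h := congrArg (List.drop 1) hih.symm
          rw [List.drop_drop] at h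
          rw [h, hX]
          rfl
        rw [hstep, hstep2]
        simp [visited, hq]

lemma isValidWalk_take (hW : IsValidWalk F W) (n : ℕ) : IsValidWalk F (W.take n) := by
  obtain ⟨h1, h2, h3⟩ := hW
  refine ⟨?_, fun q hq => h2 q (List.mem_of_mem_take hq), ?_⟩
  · intro i hi
    have hi' : i + 1 < W.length := by simp at hi; omega
    have := h1 i hi'
    simpa using this
  · intro i hi
    have hi' : i + 1 < W.length := by simp at hi; omega
    have := h3 i hi'
    simpa using this

lemma isValidWalk_drop (hW : IsValidWalk F W) (n : ℕ) : IsValidWalk F (W.drop n) := by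
  obtain ⟨h1, h2, h3⟩ := hW
  refine ⟨?_, fun q hq => h2 q (List.mem_of_mem_drop hq), ?_⟩
  · intro i hi
    have hi' : (n + i) + 1 < W.length := by simp at hi; omega
    have := h1 (n+i) hi'
    simp only [List.getElem_drop]
    convert this using 3
    omega
  · intro i hi
    have hi' : (n + i) + 1 < W.length := by simp at hi; omega
    have := h3 (n+i) hi'
    simp only [List.getElem_drop]
    convert this using 3
    omega

lemma isValidWalk_append (h1 : IsValidWalk F W1) (h2 : IsValidWalk F W2)
    (hne1 : W1 ≠ []) (hne2 : W2 ≠ [])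
    (hj1 : qdst (W1.getLast hne1) = qsrc (W2.head hne2))
    (hj2 : qarr (W1.getLast hne1) ≤ qdep (W2.head hne2)) :
    IsValidWalk F (W1 ++ W2) := by
  obtain ⟨h1a, h1b, h1c⟩ := h1
  obtain ⟨h2a, h2b, h2c⟩ := h2
  have hl1 : 0 < W1.length := List.length_pos_of_ne_nil hne1
  have hl2 : 0 < W2.length := List.length_pos_of_ne_nil hne2
  have hlast : W1.getLast hne1 = W1[W1.length - 1]'(by omega) := List.getLast_eq_getElem hne1
  have hhead : W2.head hne2 = W2[0]'hl2 := List.head_eq_getElem hne2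
  have key : ∀ i, ∀ hi : i < W1.length + W2.length,
      (W1 ++ W2)[i]'(by simpa using hi) = if h : i < W1.length then W1[i]'h else W2[i - W1.length]'(by omega) := by
    intro i hi
    split
    · next h => exact List.getElem_append_left h
    · next h => exact List.getElem_append_right (by omega)
  constructor
  · intro i hi
    have hi' : i + 1 < W1.length + W2.length := by simpa using hi
    rw [key i (by omega), key (i+1) (by omega)]
    split
    · next h =>
      split
      · next h' => exact h1a i h'
      · next h' =>
        have : i + 1 = W1.length := by omega
        have e1 : W1[i]'h = W1.getLast hne1 := by rw [hlast]; congr 1; omega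
        have e2 : W2[i+1 - W1.length]'(by omega) = W2.head hne2 := by rw [hhead]; congr 1; omega
        rw [e1, e2]; exact hj1
    · next h =>
      split
      · next h' => omega
      · next h' =>
        have := h2a (i - W1.length) (by omega)
        convert this using 3
        omega
  refine ⟨fun q hq => ?_, ?_⟩
  · rcases List.mem_append.mp hq with h | h
    · exact h1b q h
    · exact h2b q h
  · intro i hi
    have hi' : i + 1 < W1.length + W2.length := by simpa using hi
    rw [key i (by omega), key (i+1) (by omega)]
    split
    · next h =>
      split
      · next h' => exact h1c i h'
      · next h' =>
        have e1 : W1[i]'h = W1.getLast hne1 := by rw [hlast]; congr 1; omega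
        have e2 : W2[i+1 - W1.length]'(by omega) = W2.head hne2 := by rw [hhead]; congr 1; omega
        rw [e1, e2]; exact hj2
    · next h =>
      split
      · next h' => omega
      · next h' =>
        have := h2c (i - W1.length) (by omega)
        convert this using 3
        omega

lemma walk_arr_le_dep (hW : IsValidWalk F W) :
    ∀ r, ∀ hr : r < W.length, ∀ j, ∀ hj : j < W.length, j < r →
      qarr (W[j]'hj) ≤ qdep (W[r]'hr) := by
  intro r
  induction r with
  | zero => omega
  | succ r ih =>
    intro hr j hj hjr
    rcases Nat.lt_or_ge j r with h | h
    · refine le_trans (ih (by omega) j hj h) (le_trans (le_of_lt (hW.2.1 _ (List.getElem_mem _)).1) (hW.2.2 r hr))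
    · have : j = r := by omega
      subst this
      exact hW.2.2 j hr

lemma walk_arr_mono (hW : IsValidWalk F W) :
    ∀ r, ∀ hr : r < W.length, ∀ j, ∀ hj : j < W.length, j ≤ r →
      qarr (W[j]'hj) ≤ qarr (W[r]'hr) := by
  intro r hr j hj hjr
  rcases Nat.lt_or_ge j r with h | h
  · exact le_of_lt (lt_of_le_of_lt (walk_arr_le_dep hW r hr j hj h)
      (hW.2.1 _ (List.getElem_mem _)).1)
  · have : j = r := by omega
    subst this; rfl

lemma walkCost_append : walkCost F (W1 ++ W2) = walkCost F W1 + walkCost F W2 := by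
  simp [walkCost]

lemma walkCost_take_drop (n : ℕ) : walkCost F W = walkCost F (W.take n) + walkCost F (W.drop n) := by
  conv_lhs => rw [← List.take_append_drop n W]
  exact walkCost_append

lemma walkCost_take_le (n : ℕ) : walkCost F (W.take n) ≤ walkCost F W := by
  rw [walkCost_take_drop (W := W) n]; exact le_self_add

lemma walkCost_take_le_take {m n : ℕ} (h : m ≤ n) : walkCost F (W.take m) ≤ walkCost F (W.take n) := by
  have : W.take m = (W.take n).take m := by rw [List.take_take, Nat.min_eq_left h]
  rw [this]
  exact walkCost_take_le m

lemma sInf_mem' {S : Set ℕ∞} (h : S.Nonempty) : sInf S ∈ S := by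
  obtain ⟨a, ha, hmin⟩ := wellFounded_lt.has_min S h
  have : sInf S = a := le_antisymm (sInf_le ha) (le_sInf fun b hb => not_lt.mp (hmin b hb))
  rw [this]; exact ha

lemma nonempty_of_sInf_lt_top {S : Set ℕ∞} (h : sInf S < ⊤) : S.Nonempty := by
  by_contra hne
  rw [Set.not_nonempty_iff_eq_empty] at hne
  simp [hne] at h

open Classical in
lemma exists_first_idx {α : Type*} (p : α → Prop) (l : List α)
    (h : ∃ x ∈ l, p x) :
    ∃ n, ∃ hn : n < l.length, p (l[n]'hn) ∧ ∀ j, ∀ hj : j < l.length, j < n → ¬ p (l[j]'hj) := by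
  obtain ⟨x, hx, hpx⟩ := h
  obtain ⟨n₀, hn₀, rfl⟩ := List.mem_iff_getElem.mp hx
  have hex : ∃ n, ∃ hn : n < l.length, p (l[n]'hn) := ⟨n₀, hn₀, hpx⟩
  classical
  obtain ⟨hn, hpn⟩ := Nat.find_spec hex
  refine ⟨Nat.find hex, hn, hpn, fun j hj hjn hpj => Nat.find_min hex hjn ⟨hj, hpj⟩⟩

lemma exists_first_nonloop {V : Type*} (W : List (V × V × ℕ × ℕ))
    (a b : ℕ) (hab : a ≤ b) (hb : b < W.length) (hnl : qsrc (W[b]'hb) ≠ qdst (W[b]'hb)) :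
    ∃ r, a ≤ r ∧ r ≤ b ∧ ∃ hr : r < W.length, qsrc (W[r]'hr) ≠ qdst (W[r]'hr) ∧
      ∀ j, a ≤ j → j < r → ∀ hj : j < W.length, qsrc (W[j]'hj) = qdst (W[j]'hj) := by
  classical
  have hex : ∃ n, a ≤ n ∧ ∃ hn : n < W.length, qsrc (W[n]'hn) ≠ qdst (W[n]'hn) :=
    ⟨b, hab, hb, hnl⟩
  obtain ⟨han, hn, hpn⟩ := Nat.find_spec hex
  refine ⟨Nat.find hex, han, ?_, hn, hpn, ?_⟩
  · by_contra hgt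
    exact absurd (Nat.find_min' hex ⟨hab, hb, hnl⟩) (by omega)
  · intro j haj hjn hj
    by_contra hne
    exact absurd (Nat.find_min' hex ⟨haj, hj, hne⟩) (by omega)

lemma src_eq_of_loops {V : Type*} {W : List (V × V × ℕ × ℕ)}
    (hchain : ∀ i, ∀ hi : i + 1 < W.length,
      qdst (W[i]'(Nat.lt_of_succ_lt hi)) = qsrc (W[i + 1]'hi)) (a : ℕ) :
    ∀ r, ∀ har : a ≤ r, ∀ hr : r < W.length,
      (∀ j, a ≤ j → j < r → ∀ hj : j < W.length, qsrc (W[j]'hj) = qdst (W[j]'hj)) →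
      qsrc (W[r]'hr) = qsrc (W[a]'(by omega)) := by
  intro r
  induction r with
  | zero => intro h hr _; have : a = 0 := by omega
            subst this; rfl
  | succ r ih =>
    intro har hr hloops
    rcases Nat.lt_or_ge a (r+1) with h | h
    · have ha : a ≤ r := by omega
      have := ih ha (by omega) (fun j h1 h2 hj => hloops j h1 (by omega) hj)
      rw [← this, ← hchain r hr]
      exact (hloops r ha (by omega) (by omega)).symm
    · have : a = r + 1 := by omega
      subst this; rfl

lemma head?_getLast?_index {V : Type*} {W : List (V × V × ℕ × ℕ)} {q1 ql : V × V × ℕ × ℕ}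
    (h1 : W.head? = some q1) (hl : W.getLast? = some ql) :
    ∃ hne : W ≠ [], q1 = W[0]'(List.length_pos_of_ne_nil hne) ∧
      ql = W[W.length - 1]'(by have := List.length_pos_of_ne_nil hne; omega) := by
  have hne : W ≠ [] := by intro h; subst h; simp at h1
  refine ⟨hne, ?_, ?_⟩
  · rw [List.head?_eq_head hne] at h1
    rw [← Option.some_inj.mp h1, List.head_eq_getElem hne]
  · rw [List.getLast?_eq_getLast hne] at hl
    rw [← Option.some_inj.mp hl, List.getLast_eq_getElem hne]

lemma visited_append (hne1 : W1 ≠ []) :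
    visited (W1 ++ W2) = visited W1 ++ W2.map qdst := by
  cases W1 with
  | nil => simp at hne1
  | cons a s => simp [visited, List.map_append]

lemma visited_getElem_src (hchain : ∀ i, ∀ hi : i + 1 < W.length,
      qdst (W[i]'(Nat.lt_of_succ_lt hi)) = qsrc (W[i + 1]'hi))
    {j : ℕ} (hj : j < W.length) :
    (visited W)[j]'(by rw [visited_length (by intro h; subst h; simp at hj)]; omega) = qsrc (W[j]'hj) := by
  match j with
  | 0 => exact visited_getElem_zero (by intro h; subst h; simp at hj)
  | j+1 =>
    rw [visited_getElem_succ (by omega : j < W.length)]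
    exact hchain j hj

lemma first_occ_decomp {α : Type*} (l : List α) (v : α) (hv : v ∈ l) :
    ∃ l₁ l₂, l = l₁ ++ v :: l₂ ∧ ∀ w ∈ l₁, w ≠ v := by
  classical
  induction l with
  | nil => cases hv
  | cons a s ih =>
    by_cases h : a = v
    · exact ⟨[], s, by rw [h]; rfl, by simp⟩
    · obtain ⟨l₁, l₂, he, hw⟩ := ih (by
        rcases List.mem_cons.mp hv with h' | h'
        · exact absurd h'.symm h
        · exact h')
      refine ⟨a :: l₁, l₂, by rw [List.cons_append, he], ?_⟩
      intro w hw'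
      rcases List.mem_cons.mp hw' with rfl | h''
      · exact h
      · exact hw w h''

lemma getElem_idx_congr {α : Type*} {l : List α} {a b : ℕ} (h : a = b) (ha : a < l.length) :
    l[a]'ha = l[b]'(h ▸ ha) := by subst h; rfl

lemma take_succ_eq {α : Type*} (l : List α) {n : ℕ} (hn : n < l.length) :
    l.take (n+1) = l.take n ++ [l[n]'hn] := by
  rw [List.take_succ, List.getElem?_eq_getElem hn]
  rfl

end Infra

/-- The colour-coding dynamic-programming recurrence: for `1 ≤ i ≤ k`, a vertex `v` of
colour `π i`, and a time `t`, the minimum cost `F*_π(v, t)` equals the minimum over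
vertices `v'` of colour `π (i-1)` and times `1 ≤ t₁ < t₂ ≤ t` of
`F*_π(v', t₁) + F̂_{{π 0, …, π (i-1)}}(v', v, t₁, t₂)`. -/
theorem fstar_recurrence {V : Type*} (F : V → V → ℕ → ℕ → ℕ∞) (T k : ℕ)
    (hF1 : ∀ u v t₁ t₂, t₂ ≤ t₁ → F u v t₁ t₂ = ⊤)
    (hF2 : ∀ v t₁ t₂, t₁ < t₂ → F v v t₁ t₂ = 0)
    (hF3 : ∀ u v t₁ t₂, u ≠ v → 0 < F u v t₁ t₂)
    (hdom : ∀ u v t₁ t₂, u ≠ v → F u v t₁ t₂ < ⊤ → 1 ≤ t₁ ∧ t₂ ≤ T)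
    (vs : V) (c : V → ℕ) (hck : ∀ v, c v ≤ k) (hc0 : ∀ v, c v = 0 ↔ v = vs)
    (π : ℕ → ℕ) (hπ0 : π 0 = 0)
    (hπ : Set.BijOn π (Set.Icc 1 k) (Set.Icc 1 k)) :
    ∀ i : ℕ, 1 ≤ i → i ≤ k → ∀ v : V, c v = π i → ∀ t : ℕ, 1 ≤ t → t ≤ T →
      Fstar F c π vs i v t =
        sInf {x : ℕ∞ | ∃ (v' : V) (t₁ t₂ : ℕ), c v' = π (i - 1) ∧
          1 ≤ t₁ ∧ t₁ < t₂ ∧ t₂ ≤ t ∧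
          x = Fstar F c π vs (i - 1) v' t₁ +
            FhatI F c {y : ℕ | ∃ j ≤ i - 1, y = π j} v' v t₁ t₂} := by
  intro i hi1 hik v hv t ht1 htT
  have hcvs : c vs = 0 := (hc0 vs).mpr rfl
  have hπmem : ∀ j, 1 ≤ j → j ≤ k → 1 ≤ π j ∧ π j ≤ k := fun j h1 h2 => hπ.mapsTo ⟨h1, h2⟩
  have hπinj : ∀ j j', j ≤ k → j' ≤ k → π j = π j' → j = j' := by
    intro j j' hj hj' he
    match j, j' with
    | 0, 0 => rfl
    | 0, j'+1 => exact absurd (hπ0 ▸ he) (by have := (hπmem (j'+1) (by omega) hj').1; omega)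
    | j+1, 0 => exact absurd (hπ0 ▸ he) (by have := (hπmem (j+1) (by omega) hj).1; omega)
    | j+1, j'+1 => exact hπ.injOn ⟨by omega, hj⟩ ⟨by omega, hj'⟩ he
  have hπipos : 1 ≤ π i := (hπmem i hi1 hik).1
  have hvne : v ≠ vs := by
    intro h; subst h; rw [hcvs] at hv; omega
  have him1 : i - 1 + 1 = i := by omega
  have hFstar_eq : ∀ (i₀ : ℕ) (v₀ : V) (t₀ : ℕ), v₀ ≠ vs → Fstar F c π vs i₀ v₀ t₀ =
      sInf {x : ℕ∞ | ∃ W, IsValidWalk F W ∧ WalkFrom W vs v₀ ∧ (∀ q ∈ W, qarr q ≤ t₀) ∧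
        (∀ w ∈ visited W, ∃ j ≤ i₀, c w = π j) ∧ (∀ j ≤ i₀, ∃ w ∈ visited W, c w = π j) ∧
        (∀ j j' : ℕ, j < j' → j' ≤ i₀ → ∀ l₁ l₂ : List V, visited W = l₁ ++ l₂ →
          (∃ w ∈ l₁, c w = π j') → ∃ w ∈ l₁, c w = π j) ∧
        (∃ l₁ l₂ : List V, visited W = l₁ ++ v₀ :: l₂ ∧ ∀ w ∈ l₁, c w ≠ π i₀) ∧
        walkCost F W = x} := fun i₀ v₀ t₀ h => by simp only [Fstar, if_neg h]
  have hFstar0 : ∀ (i₀ t₀ : ℕ), Fstar F c π vs i₀ vs t₀ = 0 :=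
    fun i₀ t₀ => by simp [Fstar]
  rw [hFstar_eq i v t hvne]
  apply le_antisymm
  · -- LHS ≤ RHS
    refine le_sInf ?_
    rintro x ⟨v', t₁, t₂, hcv', ht₁1, ht₁₂, ht₂t, rfl⟩
    rcases eq_top_or_lt_top (Fstar F c π vs (i-1) v' t₁ +
        FhatI F c {y : ℕ | ∃ j ≤ i - 1, y = π j} v' v t₁ t₂) with htop | hlt
    · rw [htop]; exact le_top
    rw [ENat.add_lt_top] at hlt
    obtain ⟨hFs, hFh⟩ := hlt
    have hFh' := hFh
    simp only [FhatI] at hFh'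
    obtain ⟨W2, q1, ql, hW2v, hh2, hl2, hsrc2, hdst2, hdep2, harr2, hcol2, hcost2⟩ :=
      sInf_mem' (nonempty_of_sInf_lt_top hFh')
    obtain ⟨hne2, hq1, hql⟩ := head?_getLast?_index hh2 hl2
    have hlen2 : 0 < W2.length := List.length_pos_of_ne_nil hne2
    have hFh_eq : FhatI F c {y : ℕ | ∃ j ≤ i - 1, y = π j} v' v t₁ t₂ = walkCost F W2 := by
      simp only [FhatI]; exact hcost2.symm
    have harrW2 : ∀ q ∈ W2, qarr q ≤ t₂ := by
      intro q hq
      obtain ⟨j, hj, rfl⟩ := List.mem_iff_getElem.mp hq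
      have hm := walk_arr_mono hW2v (W2.length - 1) (by omega) j hj (by omega)
      rw [← hql, harr2] at hm
      exact hm
    have hvmem2 : v ∈ visited W2 :=
      (mem_visited_iff hne2).mpr (Or.inr ⟨W2.length - 1, by omega, by rw [← hql, hdst2]⟩)
    by_cases hv's : v' = vs
    · -- v' = vs, so i = 1
      have hi1' : i = 1 := by
        have h0 : π (i-1) = π 0 := by rw [hπ0, ← hcv', hv's, hcvs]
        have := hπinj (i-1) 0 (by omega) (by omega) h0
        omega
      have hFs0 : Fstar F c π vs (i-1) v' t₁ = 0 := by rw [hv's]; exact hFstar0 _ _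
      rw [hFs0, zero_add, hFh_eq]
      apply sInf_le
      have hvs0 : qsrc (W2[0]'hlen2) = vs := by rw [← hq1, hsrc2, hv's]
      have hvsmem : vs ∈ visited W2 := (mem_visited_iff hne2).mpr (Or.inl hvs0.symm)
      refine ⟨W2, hW2v, ⟨q1, ql, hh2, hl2, by rw [hsrc2, hv's], hdst2⟩,
        fun q hq => le_trans (harrW2 q hq) ht₂t, ?_, ?_, ?_, ?_, rfl⟩
    -- colours
      · intro w hw
        by_cases hwv : w = v
        · exact ⟨i, le_refl i, by rw [hwv, hv]⟩
        · obtain ⟨j, hj, hy⟩ := hcol2 w hw hwv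
          exact ⟨j, by omega, hy⟩
      · -- all colours appear
        intro j hj
        rcases Nat.eq_zero_or_pos j with rfl | hjpos
        · exact ⟨vs, hvsmem, by rw [hcvs, hπ0]⟩
        · have : j = i := by omega
          subst this
          exact ⟨v, hvmem2, hv⟩
      · -- order
        intro j j' hjj' hj'1 l₁ l₂ heq hex
        have hj0 : j = 0 := by omega
        subst hj0
        obtain ⟨w0, hw0, hcw0⟩ := hex
        have hvis2 : visited W2 = vs :: W2.map qdst := by
          rw [visited_eq hne2, List.head_eq_getElem hne2, hvs0]
        rw [hvis2] at heq
        cases l₁ with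
        | nil => exact absurd hw0 (List.not_mem_nil)
        | cons b bs =>
          rw [List.cons_append] at heq
          have hb : b = vs := (List.cons.injEq _ _ _ _ ▸ heq).1.symm
          exact ⟨b, List.mem_cons_self, by rw [hb, hcvs, hπ0]⟩
      · -- first v
        obtain ⟨l₁, l₂, hdec, hnev⟩ := first_occ_decomp _ v hvmem2
        refine ⟨l₁, l₂, hdec, fun w hw => ?_⟩
        have hwvis : w ∈ visited W2 := by rw [hdec]; exact List.mem_append_left _ hw
        obtain ⟨j, hj, hcw⟩ := hcol2 w hwvis (hnev w hw)
        rw [hcw]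
        intro hcontra
        have := hπinj j i (by omega) hik hcontra
        omega
    · -- v' ≠ vs
      have hπim1pos : 1 ≤ π (i-1) := by
        rcases Nat.eq_zero_or_pos (π (i-1)) with h | h
        · exact absurd ((hc0 v').mp (hcv'.trans h)) hv's
        · exact h
      have hFs' := hFs
      simp only [Fstar, if_neg hv's] at hFs'
      obtain ⟨W1, hW1v, hWF1, harr1, hcol1, happ1, hord1, hfirst1, hcost1⟩ :=
        sInf_mem' (nonempty_of_sInf_lt_top hFs')
      obtain ⟨p1, pl, hh1, hl1, hs1, hd1⟩ := hWF1
      obtain ⟨hne1, hp1, hpl⟩ := head?_getLast?_index hh1 hl1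
      have hlen1 : 0 < W1.length := List.length_pos_of_ne_nil hne1
      have hFs_eq : Fstar F c π vs (i-1) v' t₁ = walkCost F W1 := by
        rw [hFstar_eq _ _ _ hv's]; exact hcost1.symm
      have hjunc1 : qdst (W1.getLast hne1) = qsrc (W2.head hne2) := by
        rw [List.getLast_eq_getElem hne1, ← hpl, hd1, List.head_eq_getElem hne2, ← hq1, hsrc2]
      have hjunc2 : qarr (W1.getLast hne1) ≤ qdep (W2.head hne2) := by
        rw [List.head_eq_getElem hne2, ← hq1, hdep2]
        exact harr1 _ (List.getLast_mem hne1)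
      have hWv := isValidWalk_append hW1v hW2v hne1 hne2 hjunc1 hjunc2
      have hvisA : visited (W1 ++ W2) = visited W1 ++ W2.map qdst := visited_append hne1
      have hmapsub : ∀ w ∈ W2.map qdst, w ∈ visited W2 := by
        intro w hw; rw [visited_eq hne2]; exact List.mem_cons_of_mem _ hw
      have hvmemA : v ∈ visited (W1 ++ W2) := by
        rw [hvisA]
        exact List.mem_append_right _
          (List.mem_map.mpr ⟨ql, by rw [hql]; exact List.getElem_mem _, hdst2⟩)
      rw [hFs_eq, hFh_eq, ← walkCost_append]
      apply sInf_le
      refine ⟨W1 ++ W2, hWv, ⟨p1, ql, ?_, ?_, hs1, hdst2⟩, ?_, ?_, ?_, ?_, ?_, rfl⟩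
      · rw [List.head?_append, hh1]; rfl
      · rw [List.getLast?_append, hl2]; rfl
      · -- arrival times
        intro q hq
        rcases List.mem_append.mp hq with h | h
        · have := harr1 q h; omega
        · have := harrW2 q h; omega
      · -- colours
        intro w hw
        rw [hvisA] at hw
        rcases List.mem_append.mp hw with h | h
        · obtain ⟨j, hj, hy⟩ := hcol1 w h
          exact ⟨j, by omega, hy⟩
        · by_cases hwv : w = v
          · exact ⟨i, le_refl i, by rw [hwv, hv]⟩
          · obtain ⟨j, hj, hy⟩ := hcol2 w (hmapsub w h) hwv
            exact ⟨j, by omega, hy⟩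
      · -- all colours appear
        intro j hj
        rcases Nat.lt_or_ge j i with hji | hji
        · obtain ⟨w, hw, hcw⟩ := happ1 j (by omega)
          exact ⟨w, by rw [hvisA]; exact List.mem_append_left _ hw, hcw⟩
        · have : j = i := by omega
          subst this
          exact ⟨v, hvmemA, hv⟩
      · -- order
        intro j j' hjj' hj'i l₁ l₂ heq hex
        rw [hvisA] at heq
        rcases le_or_gt l₁.length (visited W1).length with hle | hgt
        · have h1 : l₁ = (visited W1).take l₁.length := by
            have h1 : (visited W1 ++ W2.map qdst).take l₁.length = (visited W1).take l₁.length :=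
              List.take_append_of_le_length hle
            rw [heq, List.take_left] at h1
            exact h1
          have hsplit : visited W1 = l₁ ++ (visited W1).drop l₁.length := by
            conv_lhs => rw [← List.take_append_drop l₁.length (visited W1)]
            rw [← h1]
          rcases Nat.lt_or_ge j' i with hj'lt | hj'ge
          · exact hord1 j j' hjj' (by omega) l₁ _ hsplit hex
          · have hj'eq : j' = i := by omega
            obtain ⟨w, hw, hcw⟩ := hex
            have hwvis1 : w ∈ visited W1 := by rw [hsplit]; exact List.mem_append_left _ hw
            obtain ⟨j₀, hj₀, hc₀⟩ := hcol1 w hwvis1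
            have := hπinj j₀ i (by omega) hik (by rw [← hc₀, hcw, hj'eq])
            omega
        · have hsub : ∀ w ∈ visited W1, w ∈ l₁ := by
            intro w hw
            have h1 : (l₁ ++ l₂).take (visited W1).length = l₁.take (visited W1).length :=
              List.take_append_of_le_length (by omega)
            rw [← heq, List.take_left] at h1
            rw [h1] at hw
            exact List.mem_of_mem_take hw
          obtain ⟨w, hw, hcw⟩ := happ1 j (by omega)
          exact ⟨w, hsub w hw, hcw⟩
      · -- first v
        obtain ⟨l₁, l₂, hdec, hnev⟩ := first_occ_decomp _ v hvmemA
        refine ⟨l₁, l₂, hdec, fun w hw => ?_⟩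
        have hwvis : w ∈ visited W1 ++ W2.map qdst := by
          rw [← hvisA, hdec]; exact List.mem_append_left _ hw
        rcases List.mem_append.mp hwvis with h | h
        · obtain ⟨j₀, hj₀, hc₀⟩ := hcol1 w h
          rw [hc₀]; intro hcontra
          have := hπinj j₀ i (by omega) hik hcontra; omega
        · obtain ⟨j₀, hj₀, hc₀⟩ := hcol2 w (hmapsub w h) (hnev w hw)
          rw [hc₀]; intro hcontra
          have := hπinj j₀ i (by omega) hik hcontra; omega
  · -- RHS ≤ LHS
    refine le_sInf ?_
    rintro x ⟨W, hWv, hWF, harrt, hcolall, hallapp, hord, hfirst, rfl⟩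
    obtain ⟨p1, pl, hh, hl, hs0, hdl⟩ := hWF
    obtain ⟨hne, hp1, hpl⟩ := head?_getLast?_index hh hl
    have hlen : 0 < W.length := List.length_pos_of_ne_nil hne
    have hchain := hWv.1
    have hVlen : (visited W).length = W.length + 1 := visited_length hne
    have hV0 : (visited W)[0]'(by omega) = vs := by
      rw [visited_getElem_zero hne, ← hp1, hs0]
    obtain ⟨L₁, L₂, hLdec, hL₁⟩ := hfirst
    have hlenL : L₁.length < (visited W).length := by rw [hLdec]; simp
    have hL₁ne : L₁ ≠ [] := by
      intro h0
      rw [h0] at hLdec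
      have hx : (visited W)[0]'(by omega) = v := by
        rw [List.getElem_of_eq hLdec]; rfl
      exact hvne (hx.symm.trans hV0)
    obtain ⟨m, hm⟩ : ∃ m, L₁.length = m + 1 :=
      ⟨L₁.length - 1, by have := List.length_pos_of_ne_nil hL₁ne; omega⟩
    have hmlen : m + 1 < (visited W).length := hm ▸ hlenL
    have hmW : m < W.length := by omega
    have hL₁take : L₁ = (visited W).take (m+1) := by
      rw [hLdec, ← hm]
      exact List.take_left.symm
    have hVm1 : (visited W)[m+1]'hmlen = v := by
      rw [List.getElem_of_eq hLdec, List.getElem_append_right (by omega)]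
      simp [hm]
    have hdstm : qdst (W[m]'hmW) = v := (visited_getElem_succ hmW).symm.trans hVm1
    have hL₁mem : ∀ jj, ∀ hjj : jj < m + 1, (visited W)[jj]'(by omega) ∈ L₁ := by
      intro jj hjj
      have hsub : ∀ x ∈ (visited W).take (m+1), x ∈ L₁ := by
        intro x hx; rw [hL₁take]; exact hx
      exact hsub _ (List.mem_iff_getElem.mpr ⟨jj, by simp; omega, List.getElem_take⟩)
    have hcolm : ∀ jj, ∀ hjj : jj < m + 1, c ((visited W)[jj]'(by omega)) ≠ π i :=
      fun jj hjj => hL₁ _ (hL₁mem jj hjj)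
    -- first occurrence of colour π (i-1)
    obtain ⟨w0, hw0mem, hw0c⟩ := hallapp (i-1) (by omega)
    obtain ⟨P, hP, hPc, hPmin⟩ :=
      exists_first_idx (fun w => c w = π (i-1)) (visited W) ⟨w0, hw0mem, hw0c⟩
    have hsplitM1 : visited W = (L₁ ++ [v]) ++ L₂ := by rw [hLdec]; simp
    obtain ⟨w1, hw1mem, hw1c⟩ := hord (i-1) i (by omega) (le_refl i) (L₁ ++ [v]) L₂ hsplitM1
      ⟨v, List.mem_append_right _ (List.mem_singleton.mpr rfl), hv⟩
    have hw1L₁ : w1 ∈ L₁ := by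
      rcases List.mem_append.mp hw1mem with h | h
      · exact h
      · exfalso
        rw [List.mem_singleton.mp h, hv] at hw1c
        have := hπinj i (i-1) hik (by omega) hw1c
        omega
    have hPm : P < m + 1 := by
      rw [hL₁take] at hw1L₁
      obtain ⟨jj, hjj, hjje⟩ := List.mem_iff_getElem.mp hw1L₁
      have hjjm : jj < m + 1 := by simp at hjj; omega
      have hjjV : jj < (visited W).length := by omega
      have hjjw : (visited W)[jj]'hjjV = w1 := (List.getElem_take).symm.trans hjje
      by_contra hge
      exact hPmin jj hjjV (by omega) (by rw [hjjw]; exact hw1c)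
    have hPW : P < W.length := by omega
    have hv'P : (visited W)[P]'(by omega) = qsrc (W[P]'hPW) := visited_getElem_src hchain hPW
    -- the quadruple at m is not a loop
    have hnlm : qsrc (W[m]'hmW) ≠ qdst (W[m]'hmW) := by
      rw [hdstm, ← visited_getElem_src hchain hmW]
      intro hcontra
      exact hcolm m (by omega) (by rw [hcontra, hv])
    obtain ⟨r, hPr, hrm, hr, hnl, hloops⟩ := exists_first_nonloop W P m (by omega) hmW hnlm
    have hsrcr : qsrc (W[r]'hr) = qsrc (W[P]'hPW) := src_eq_of_loops hchain P r hPr hr hloops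
    have ht₁pos : 1 ≤ qdep (W[r]'hr) :=
      (hdom _ _ _ _ hnl (hWv.2.1 _ (List.getElem_mem _)).2).1
    have ht₂ : qarr (W[m]'hmW) ≤ t := harrt _ (List.getElem_mem _)
    have ht₁₂ : qdep (W[r]'hr) < qarr (W[m]'hmW) :=
      lt_of_lt_of_le (hWv.2.1 _ (List.getElem_mem _)).1 (walk_arr_mono hWv m hmW r hr hrm)
    refine le_trans (sInf_le ⟨(visited W)[P]'(by omega), qdep (W[r]'hr), qarr (W[m]'hmW),
      hPc, ht₁pos, ht₁₂, ht₂, rfl⟩) ?_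
    -- cost chain
    have hcost_chain : walkCost F (W.take P) + walkCost F ((W.take (m+1)).drop r) ≤ walkCost F W := by
      have h1 : walkCost F (W.take (m+1)) =
          walkCost F ((W.take (m+1)).take r) + walkCost F ((W.take (m+1)).drop r) :=
        walkCost_take_drop r
      have h2 : (W.take (m+1)).take r = W.take r := by
        rw [List.take_take, Nat.min_eq_left (by omega)]
      have h3 : walkCost F (W.take P) ≤ walkCost F (W.take r) := walkCost_take_le_take (by omega)
      calc walkCost F (W.take P) + walkCost F ((W.take (m+1)).drop r)
          ≤ walkCost F (W.take r) + walkCost F ((W.take (m+1)).drop r) := add_le_add h3 le_rfl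
        _ = walkCost F (W.take (m+1)) := by rw [h1, h2]
        _ ≤ walkCost F W := walkCost_take_le _
    -- the W2 walk
    have hWMv := isValidWalk_take hWv (m+1)
    have hWMlen : (W.take (m+1)).length = m + 1 := by simp; omega
    have hW2v := isValidWalk_drop hWMv r
    have hW2len : ((W.take (m+1)).drop r).length = m + 1 - r := by simp; omega
    have hW2ne : (W.take (m+1)).drop r ≠ [] := by
      intro h0; rw [h0] at hW2len; simp at hW2len; omega
    have hW2get : ∀ jj, ∀ hjj : jj < m + 1 - r, ((W.take (m+1)).drop r)[jj]'(by rw [hW2len]; omega) = W[r+jj]'(by omega) := by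
      intro jj hjj
      exact (List.getElem_drop).trans (List.getElem_take)
    have hvisW2 : visited ((W.take (m+1)).drop r) = ((visited W).take (m+2)).drop r := by
      rw [visited_drop hWMv.1 (by omega), visited_take (by omega)]
    have hFhle : FhatI F c {y : ℕ | ∃ j ≤ i - 1, y = π j} ((visited W)[P]'(by omega)) v
        (qdep (W[r]'hr)) (qarr (W[m]'hmW)) ≤ walkCost F ((W.take (m+1)).drop r) := by
      simp only [FhatI]
      apply sInf_le
      have h0lt : 0 < ((W.take (m+1)).drop r).length := by omega
      have hlast : ((W.take (m+1)).drop r).length - 1 < m + 1 - r := by omega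
      refine ⟨(W.take (m+1)).drop r, ((W.take (m+1)).drop r)[0]'h0lt,
        ((W.take (m+1)).drop r)[((W.take (m+1)).drop r).length - 1]'(by omega),
        hW2v, ?_, ?_, ?_, ?_, ?_, ?_, ?_, rfl⟩
      · rw [List.head?_eq_head hW2ne, List.head_eq_getElem]
      · rw [List.getLast?_eq_getLast hW2ne, List.getLast_eq_getElem]
      · rw [hW2get 0 (by omega)]
        exact (congrArg qsrc (getElem_idx_congr (by omega) _)).trans (hsrcr.trans hv'P.symm)
      · rw [hW2get _ (by omega : ((W.take (m+1)).drop r).length - 1 < m + 1 - r)]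
        rw [getElem_idx_congr (show r + (((W.take (m+1)).drop r).length - 1) = m by omega) _]
        exact hdstm
      · rw [hW2get 0 (by omega)]
        exact congrArg qdep (getElem_idx_congr (by omega) _)
      · rw [hW2get _ (by omega : ((W.take (m+1)).drop r).length - 1 < m + 1 - r)]
        exact congrArg qarr (getElem_idx_congr (show r + (((W.take (m+1)).drop r).length - 1) = m by omega) _)
      · -- colours in I
        intro w hw hwv
        rw [hvisW2] at hw
        obtain ⟨jj, hjj, hje⟩ := List.mem_iff_getElem.mp hw
        have hjjb : r + jj < m + 2 := by simp at hjj; omega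
        have hje2 : (visited W)[r + jj]'(by omega) = w :=
          ((List.getElem_drop).trans (List.getElem_take)).symm.trans hje
        have hrjm : r + jj < m + 1 := by
          rcases Nat.lt_or_ge (r + jj) (m+1) with h | h
          · exact h
          · exfalso
            have : r + jj = m + 1 := by omega
            apply hwv
            rw [← hje2, getElem_idx_congr this _]
            exact hVm1
        obtain ⟨j₀, hj₀, hc₀⟩ := hcolall w (by rw [← hje2]; exact List.getElem_mem _)
        have hnei : c w ≠ π i := by rw [← hje2]; exact hcolm (r+jj) hrjm
        refine ⟨j₀, ?_, hc₀⟩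
        rcases Nat.lt_or_ge j₀ i with h | h
        · omega
        · exfalso; apply hnei; rw [hc₀]; congr 1; omega
    -- the W1 walk (Fstar part)
    have hFsle : Fstar F c π vs (i-1) ((visited W)[P]'(by omega)) (qdep (W[r]'hr)) ≤
        walkCost F (W.take P) := by
      by_cases hv's : (visited W)[P]'(by omega : P < (visited W).length) = vs
      · rw [hv's, hFstar0]; exact zero_le
      · have hPpos : 1 ≤ P := by
          rcases Nat.eq_zero_or_pos P with h0 | h
          · exfalso; apply hv's
            rw [getElem_idx_congr h0 _]
            exact hV0
          · exact h
        have hW1ne : W.take P ≠ [] :=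
          List.ne_nil_of_length_pos (by rw [List.length_take]; omega)
        have hvisW1 : visited (W.take P) = (visited W).take (P+1) := visited_take hPpos
        have hW1len : (W.take P).length = P := by simp; omega
        have hW1get : ∀ jj, ∀ hjj : jj < P, (W.take P)[jj]'(by omega) = W[jj]'(by omega) :=
          fun jj hjj => List.getElem_take
        have hVP : (visited W)[P]'(by omega) = qdst (W[P-1]'(by omega)) :=
          (getElem_idx_congr (show P = (P-1)+1 by omega) _).trans (visited_getElem_succ (by omega))
        rw [hFstar_eq _ _ _ hv's]
        apply sInf_le
        refine ⟨W.take P, isValidWalk_take hWv P, ?_, ?_, ?_, ?_, ?_, ?_, rfl⟩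
        · -- WalkFrom
          refine ⟨(W.take P)[0]'(by omega), (W.take P)[(W.take P).length - 1]'(by omega), ?_, ?_, ?_, ?_⟩
          · rw [List.head?_eq_head hW1ne, List.head_eq_getElem]
          · rw [List.getLast?_eq_getLast hW1ne, List.getLast_eq_getElem]
          · rw [hW1get 0 (by omega)]
            exact (congrArg qsrc hp1).symm.trans hs0
          · rw [hW1get _ (by rw [hW1len]; omega)]
            rw [getElem_idx_congr (show (W.take P).length - 1 = P - 1 by omega) _]
            exact hVP.symm
        · -- arrivals ≤ qdep W[r]
          intro q hq
          obtain ⟨jj, hjj, rfl⟩ := List.mem_iff_getElem.mp hq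
          have hjjP : jj < P := by rw [hW1len] at hjj; omega
          rw [hW1get jj hjjP]
          exact walk_arr_le_dep hWv r hr jj (by omega) (by omega)
        · -- colours ≤ i-1
          intro w hw
          rw [hvisW1] at hw
          obtain ⟨jj, hjj, hje⟩ := List.mem_iff_getElem.mp hw
          have hjjP : jj < P + 1 := by simp at hjj; omega
          have hje2 : (visited W)[jj]'(by omega) = w := (List.getElem_take).symm.trans hje
          obtain ⟨j₀, hj₀, hc₀⟩ := hcolall w (by rw [← hje2]; exact List.getElem_mem _)
          have hnei : c w ≠ π i := by rw [← hje2]; exact hcolm jj (by omega)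
          refine ⟨j₀, ?_, hc₀⟩
          rcases Nat.lt_or_ge j₀ i with h | h
          · omega
          · exfalso; apply hnei; rw [hc₀]; congr 1; omega
        · -- all colours ≤ i-1 appear
          intro j hj
          have hv'mem : (visited W)[P]'(by omega) ∈ visited (W.take P) := by
            rw [hvisW1]
            exact List.mem_iff_getElem.mpr ⟨P, by simp; omega, List.getElem_take⟩
          rcases Nat.lt_or_ge j (i-1) with hji | hji
          · have hsplit : visited W = (visited W).take (P+1) ++ (visited W).drop (P+1) :=
              (List.take_append_drop _ _).symm
            obtain ⟨w, hw, hcw⟩ := hord j (i-1) hji (by omega) _ _ hsplit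
              ⟨(visited W)[P]'(by omega), List.mem_iff_getElem.mpr ⟨P, by simp; omega, List.getElem_take⟩, hPc⟩
            exact ⟨w, by rw [hvisW1]; exact hw, hcw⟩
          · have : j = i - 1 := by omega
            subst this
            exact ⟨_, hv'mem, hPc⟩
        · -- order
          intro j j' hjj' hj'i l₁ l₂ heq hex
          have hsplit : visited W = l₁ ++ (l₂ ++ (visited W).drop (P+1)) := by
            rw [← List.append_assoc, ← heq, hvisW1, List.take_append_drop]
          exact hord j j' hjj' (by omega) l₁ _ hsplit hex
        · -- first occurrence of v'
          refine ⟨(visited W).take P, [], ?_, ?_⟩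
          · rw [hvisW1, take_succ_eq (visited W) (show P < (visited W).length by omega)]
          · intro w hw
            obtain ⟨jj, hjj, hje⟩ := List.mem_iff_getElem.mp hw
            have hjjP : jj < P := by simp at hjj; omega
            have hje2 : (visited W)[jj]'(by omega) = w := (List.getElem_take).symm.trans hje
            intro hcontra
            exact hPmin jj (by omega) hjjP (by rw [hje2]; exact hcontra)
    exact le_trans (add_le_add hFsle hFhle) hcost_chain
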